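/- The translated Casimir elements ĉ_q in U(so(n,C)) satisfy the quadratic identity 2ĉ_{2q+1} = −ĉ_{2q} + Σ_{p=0}^{2q} (−1)^p ĉ_{2q−p} ĉ_p for every q ≥ 0. In particular (q = 0), 2ĉ_1 = −ĉ_0 + ĉ_0², i.e. ĉ_1 = n(n−1)/2. -/
import Mathlib

set_option linter.unusedSectionVars false
set_option maxHeartbeats 1000000

/-- The iterated products `e_{ij}^q` in an associative algebra, `e_{ij}^0 = δ_{ij}`. -/
def epow {n : ℕ} {R : Type*} [Ring R] (e : Fin n → Fin n → R) : ℕ → Fin n → Fin n → R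
  | 0, i, j => if i = j then 1 else 0
  | q + 1, i, j => ∑ k : Fin n, e i k * epow e q k j

/-- The translated generators `ê_{ij} := e_{ij} + ((n−1)/2) δ_{ij}`. -/
noncomputable def ehat {n : ℕ} {R : Type*} [Ring R] [Algebra ℂ R]
    (e : Fin n → Fin n → R) (i j : Fin n) : R :=
  e i j + (((n : ℂ) - 1) / 2) • (if i = j then (1 : R) else 0)

/-- The translated Casimir elements `ĉ_q := Σ_i ê_{ii}^q`. -/
noncomputable def chat {n : ℕ} {R : Type*} [Ring R] [Algebra ℂ R]
    (e : Fin n → Fin n → R) (q : ℕ) : R :=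
  ∑ i : Fin n, epow (ehat e) q i i

section Aux
variable {n : ℕ} {R : Type*} [Ring R] [Algebra ℂ R]

lemma epow_zero (e : Fin n → Fin n → R) (i j : Fin n) :
    epow e 0 i j = if i = j then 1 else 0 := rfl

lemma epow_succ (e : Fin n → Fin n → R) (q : ℕ) (i j : Fin n) :
    epow e (q+1) i j = ∑ k, e i k * epow e q k j := rfl

lemma epow_succ_right (e : Fin n → Fin n → R) (q : ℕ) (i j : Fin n) :
    epow e (q+1) i j = ∑ k, epow e q i k * e k j := by
  induction q generalizing i j with
  | zero => simp [epow_succ, epow_zero, ite_mul, mul_ite]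
  | succ q ih =>
    rw [epow_succ]
    simp_rw [ih, Finset.mul_sum, ← mul_assoc]
    rw [Finset.sum_comm]
    simp_rw [← Finset.sum_mul]
    simp_rw [← epow_succ, ← ih]


lemma mul_delta (x : R) (i j : Fin n) :
    x * (if i = j then (1:R) else 0) = if j = i then x else 0 := by
  by_cases h : i = j
  · rw [if_pos h, if_pos h.symm, mul_one]
  · rw [if_neg h, if_neg (fun hh => h hh.symm), mul_zero]

lemma delta_comm (P : Prop) [Decidable P] (c : ℂ) (x : R) :
    (c • (if P then (1:R) else 0)) * x = x * (c • (if P then (1:R) else 0)) := by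
  split_ifs <;> simp [smul_mul_assoc, mul_smul_comm]

lemma ite_add_zero' (P : Prop) [Decidable P] (a b : R) :
    (if P then a + b else 0) = (if P then a else 0) + (if P then b else 0) := by
  split_ifs <;> simp

lemma ehat_antisym (e : Fin n → Fin n → R) (hskew : ∀ i j, e i j = - e j i) (i j : Fin n) :
    ehat e i j = - ehat e j i + ((n : ℂ) - 1) • (if i = j then (1:R) else 0) := by
  have hij : (if i = j then (1:R) else 0) = (if j = i then (1:R) else 0) := by
    split_ifs with h1 h2 <;> subst_vars <;> simp_all
  simp only [ehat]
  rw [hskew i j, hij]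
  module

lemma hatcomm (e : Fin n → Fin n → R)
    (hcomm : ∀ k l i j, e k l * e i j - e i j * e k l =
      (if k = i then e l j else 0) + (if k = j then e i l else 0)
        - (if i = l then e k j else 0) - (if l = j then e i k else 0))
    (k l i j : Fin n) :
    ehat e k l * ehat e i j - ehat e i j * ehat e k l =
      (if k = i then ehat e l j else 0) + (if k = j then ehat e i l else 0)
        - (if i = l then ehat e k j else 0) - (if l = j then ehat e i k else 0) := by
  have hL : ehat e k l * ehat e i j - ehat e i j * ehat e k l
      = e k l * e i j - e i j * e k l := by
    simp only [ehat, add_mul, mul_add]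
    rw [delta_comm (k = l), delta_comm (i = j),
      delta_comm (i = j) (((n : ℂ) - 1) / 2)
        ((((n : ℂ) - 1) / 2) • (if k = l then (1:R) else 0))]
    abel
  have ha : (if k = i then (((n : ℂ) - 1) / 2) • (if l = j then (1:R) else 0) else 0)
      = (if l = j then (((n : ℂ) - 1) / 2) • (if i = k then (1:R) else 0) else 0) := by
    split_ifs <;> subst_vars <;> simp_all
  have hb : (if k = j then (((n : ℂ) - 1) / 2) • (if i = l then (1:R) else 0) else 0)
      = (if i = l then (((n : ℂ) - 1) / 2) • (if k = j then (1:R) else 0) else 0) := by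
    split_ifs <;> subst_vars <;> simp_all
  rw [hL, hcomm]
  simp only [ehat, ite_add_zero']
  rw [ha, hb]
  abel

lemma star_lemma (e : Fin n → Fin n → R)
    (hatc : ∀ k l i j, ehat e k l * ehat e i j - ehat e i j * ehat e k l =
      (if k = i then ehat e l j else 0) + (if k = j then ehat e i l else 0)
        - (if i = l then ehat e k j else 0) - (if l = j then ehat e i k else 0))
    (q : ℕ) (k l i j : Fin n) :
    ehat e k l * epow (ehat e) q i j - epow (ehat e) q i j * ehat e k l =
      (if k = i then epow (ehat e) q l j else 0) + (if k = j then epow (ehat e) q i l else 0)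
        - (if i = l then epow (ehat e) q k j else 0)
        - (if l = j then epow (ehat e) q i k else 0) := by
  induction q generalizing i j with
  | zero =>
    simp only [epow_zero]
    have h0 : ehat e k l * (if i = j then (1:R) else 0)
        - (if i = j then (1:R) else 0) * ehat e k l = 0 := by
      split_ifs <;> simp
    rw [h0]
    split_ifs <;> subst_vars <;> simp_all
  | succ q ih =>
    simp only [epow_succ]
    have key : ∀ m : Fin n,
        ehat e k l * (ehat e i m * epow (ehat e) q m j)
          - (ehat e i m * epow (ehat e) q m j) * ehat e k l
        = (ehat e k l * ehat e i m - ehat e i m * ehat e k l) * epow (ehat e) q m j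
          + ehat e i m * (ehat e k l * epow (ehat e) q m j
            - epow (ehat e) q m j * ehat e k l) := by
      intro m; noncomm_ring
    calc ehat e k l * ∑ m, ehat e i m * epow (ehat e) q m j
          - (∑ m, ehat e i m * epow (ehat e) q m j) * ehat e k l
        = ∑ m, (ehat e k l * (ehat e i m * epow (ehat e) q m j)
            - (ehat e i m * epow (ehat e) q m j) * ehat e k l) := by
          rw [Finset.mul_sum, Finset.sum_mul, ← Finset.sum_sub_distrib]
      _ = ∑ m, ((ehat e k l * ehat e i m - ehat e i m * ehat e k l) * epow (ehat e) q m j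
            + ehat e i m * (ehat e k l * epow (ehat e) q m j
              - epow (ehat e) q m j * ehat e k l)) := by
          exact Finset.sum_congr rfl fun m _ => key m
      _ = _ := by
          simp only [hatc, ih]
          simp only [add_mul, sub_mul, mul_add, mul_sub, ite_mul, mul_ite, zero_mul, mul_zero,
            Finset.sum_add_distrib, Finset.sum_sub_distrib, Finset.sum_ite_irrel,
            Finset.sum_const_zero, Finset.sum_ite_eq, Finset.sum_ite_eq', Finset.mem_univ,
            if_true, ← Finset.mul_sum, ← Finset.sum_mul]
          abel

lemma T_rec (e : Fin n → Fin n → R) (hskew : ∀ i j, e i j = - e j i)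
    (hatc : ∀ k l i j, ehat e k l * ehat e i j - ehat e i j * ehat e k l =
      (if k = i then ehat e l j else 0) + (if k = j then ehat e i l else 0)
        - (if i = l then ehat e k j else 0) - (if l = j then ehat e i k else 0))
    (q : ℕ) (i j : Fin n) :
    epow (ehat e) (q+1) j i
      = -(∑ k, epow (ehat e) q k i * ehat e k j) - epow (ehat e) q i j
        + (if j = i then chat e q else 0) := by
  have hc : ∀ y : R, (((n:ℂ)-1)) • y = n • y - y := by
    intro y; rw [sub_smul, one_smul, Nat.cast_smul_eq_nsmul]
  rw [epow_succ]
  have hterm : ∀ k, ehat e j k * epow (ehat e) q k i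
      = -(epow (ehat e) q k i * ehat e k j)
        - (if k = i then epow (ehat e) q k j else 0)
        + (if k = j then epow (ehat e) q k i else 0)
        + (if j = i then epow (ehat e) q k k else 0)
        - epow (ehat e) q j i
        + ((n:ℂ)-1) • ((if j = k then (1:R) else 0) * epow (ehat e) q k i) := by
    intro k
    rw [ehat_antisym e hskew j k, add_mul, neg_mul, smul_mul_assoc]
    have h := star_lemma e hatc q k j k i
    rw [if_pos rfl] at h
    have h2 : ehat e k j * epow (ehat e) q k i
        = epow (ehat e) q k i * ehat e k j + (epow (ehat e) q j i
          + (if k = i then epow (ehat e) q k j else 0)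
          - (if k = j then epow (ehat e) q k i else 0)
          - (if j = i then epow (ehat e) q k k else 0)) := by
      rw [← h]; abel
    rw [h2]; abel
  simp_rw [hterm, hc]
  simp only [ite_mul, one_mul, zero_mul, Finset.sum_add_distrib, Finset.sum_sub_distrib,
    Finset.sum_neg_distrib, Finset.sum_ite_eq, Finset.sum_ite_eq', Finset.sum_ite_irrel,
    Finset.sum_const_zero, Finset.sum_const, Finset.mem_univ, if_true, Fintype.card_fin,
    Finset.card_univ, ← Finset.smul_sum, chat]
  abel

lemma T_closed (e : Fin n → Fin n → R) (hskew : ∀ i j, e i j = - e j i)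
    (hatc : ∀ k l i j, ehat e k l * ehat e i j - ehat e i j * ehat e k l =
      (if k = i then ehat e l j else 0) + (if k = j then ehat e i l else 0)
        - (if i = l then ehat e k j else 0) - (if l = j then ehat e i k else 0))
    (q : ℕ) (i j : Fin n) :
    epow (ehat e) (q+1) j i
      = ((-1:ℂ)^(q+1)) • epow (ehat e) (q+1) i j
        + ∑ p ∈ Finset.range (q+1), ((-1:ℂ)^(q-p)) • (chat e p * epow (ehat e) (q-p) i j)
        - (if Even q then epow (ehat e) q i j else 0) := by
  induction q generalizing i j with
  | zero =>
    rw [T_rec e hskew hatc 0 i j]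
    rw [Finset.sum_range_one]
    simp only [Nat.sub_zero, pow_one, pow_zero, one_smul, if_pos Even.zero]
    have h1 : epow (ehat e) 1 i j = ehat e i j := by
      simp [epow_succ, epow_zero, mul_ite, mul_one, mul_zero, Finset.sum_ite_eq']
    have h2 : (∑ k, epow (ehat e) 0 k i * ehat e k j) = ehat e i j := by
      simp [epow_zero, ite_mul, one_mul, zero_mul, Finset.sum_ite_eq']
    rw [h1, h2, epow_zero, mul_delta (chat e 0) i j]
    simp only [zero_add, pow_one, neg_smul, one_smul]
    abel
  | succ q ih =>
    rw [T_rec e hskew hatc (q+1) i j]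
    have hsum : (∑ k, epow (ehat e) (q+1) k i * ehat e k j)
        = ((-1:ℂ)^(q+1)) • epow (ehat e) (q+2) i j
          + ∑ p ∈ Finset.range (q+1), ((-1:ℂ)^(q-p)) • (chat e p * epow (ehat e) (q-p+1) i j)
          - (if Even q then epow (ehat e) (q+1) i j else 0) := by
      rw [Finset.sum_congr rfl fun k (_ : k ∈ Finset.univ) => by rw [ih i k]]
      simp only [sub_mul, add_mul, smul_mul_assoc, ite_mul, zero_mul, Finset.sum_mul,
        Finset.sum_add_distrib, Finset.sum_sub_distrib, ← Finset.smul_sum,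
        Finset.sum_ite_irrel, Finset.sum_const_zero, mul_assoc]
      rw [Finset.sum_comm]
      simp_rw [← Finset.smul_sum, ← Finset.mul_sum, ← epow_succ_right]
    rw [hsum]
    have hA : ((-1:ℂ)^(q+1+1)) • epow (ehat e) (q+1+1) i j
        = -(((-1:ℂ)^(q+1)) • epow (ehat e) (q+2) i j) := by
      rw [pow_succ, mul_neg_one, neg_smul]
    have hS : (∑ p ∈ Finset.range (q+1), ((-1:ℂ)^(q+1-p)) • (chat e p * epow (ehat e) (q+1-p) i j))
        = -(∑ p ∈ Finset.range (q+1), ((-1:ℂ)^(q-p)) • (chat e p * epow (ehat e) (q-p+1) i j)) := by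
      rw [← Finset.sum_neg_distrib]
      refine Finset.sum_congr rfl fun p hp => ?_
      have hple : p ≤ q := Nat.lt_succ_iff.mp (Finset.mem_range.mp hp)
      have h1 : q + 1 - p = (q - p) + 1 := by omega
      rw [h1, pow_succ, mul_neg_one, neg_smul]
    have hc' : ((-1:ℂ)^(q+1-(q+1))) • (chat e (q+1) * epow (ehat e) (q+1-(q+1)) i j)
        = (if j = i then chat e (q+1) else 0) := by
      simp only [Nat.sub_self, pow_zero, one_smul, epow_zero]
      exact mul_delta (chat e (q+1)) i j
    have hT : (if Even (q+1) then epow (ehat e) (q+1) i j else 0)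
        = epow (ehat e) (q+1) i j - (if Even q then epow (ehat e) (q+1) i j else 0) := by
      rcases Nat.even_or_odd q with h | h
      · rw [if_neg (by simp [Nat.even_add_one, h]), if_pos h]
        abel
      · rw [if_pos (by simp [Nat.even_add_one, Nat.not_even_iff_odd.mpr h]),
          if_neg (Nat.not_even_iff_odd.mpr h)]
        abel
    conv_rhs => rw [Finset.sum_range_succ]
    rw [hA, hS, hc', hT]
    abel

end Aux

/-- The translated Casimir elements satisfy
`2 ĉ_{2q+1} = −ĉ_{2q} + Σ_{p=0}^{2q} (−1)^p ĉ_{2q−p} ĉ_p` for every `q ≥ 0`; in particular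
(`q = 0`) `2 ĉ_1 = −ĉ_0 + ĉ_0²`, i.e. `ĉ_1 = n(n−1)/2`. -/
theorem stmt9 {n : ℕ} {R : Type*} [Ring R] [Algebra ℂ R] (e : Fin n → Fin n → R)
    (hskew : ∀ i j, e i j = - e j i)
    (hdiag : ∀ i, e i i = 0)
    (hcomm : ∀ k l i j, e k l * e i j - e i j * e k l =
      (if k = i then e l j else 0) + (if k = j then e i l else 0)
        - (if i = l then e k j else 0) - (if l = j then e i k else 0)) :
    (∀ q : ℕ, (2 : ℂ) • chat e (2 * q + 1) =
        - chat e (2 * q) +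
          ∑ p ∈ Finset.range (2 * q + 1), ((-1 : ℂ) ^ p) • (chat e (2 * q - p) * chat e p)) ∧
    ((2 : ℂ) • chat e 1 = - chat e 0 + chat e 0 * chat e 0) ∧
    (chat e 1 = (((n : ℂ) * ((n : ℂ) - 1)) / 2) • (1 : R)) := by
  have hatc := hatcomm e hcomm
  have main : ∀ q : ℕ, (2 : ℂ) • chat e (2 * q + 1) =
      - chat e (2 * q) +
        ∑ p ∈ Finset.range (2 * q + 1), ((-1 : ℂ) ^ p) • (chat e (2 * q - p) * chat e p) := by
    intro q
    have key : chat e (2*q+1) = ((-1:ℂ)^(2*q+1)) • chat e (2*q+1)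
        + ∑ p ∈ Finset.range (2*q+1), ((-1:ℂ)^(2*q-p)) • (chat e p * chat e (2*q-p))
        - chat e (2*q) := by
      calc chat e (2*q+1) = ∑ i : Fin n, epow (ehat e) (2*q+1) i i := rfl
        _ = ∑ i : Fin n, (((-1:ℂ)^(2*q+1)) • epow (ehat e) (2*q+1) i i
            + ∑ p ∈ Finset.range (2*q+1), ((-1:ℂ)^(2*q-p)) • (chat e p * epow (ehat e) (2*q-p) i i)
            - (if Even (2*q) then epow (ehat e) (2*q) i i else 0)) :=
          Finset.sum_congr rfl fun i _ => T_closed e hskew hatc (2*q) i i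
        _ = _ := by
          simp only [Finset.sum_add_distrib, Finset.sum_sub_distrib, Finset.sum_ite_irrel,
            Finset.sum_const_zero]
          rw [if_pos (even_two_mul q), Finset.sum_comm, ← Finset.smul_sum]
          simp_rw [← Finset.smul_sum, ← Finset.mul_sum]
          rfl
    have hodd : ((-1:ℂ)^(2*q+1)) = -1 := Odd.neg_one_pow ⟨q, by ring⟩
    rw [hodd, neg_one_smul] at key
    have h2 : chat e (2*q+1) + chat e (2*q+1)
        = -chat e (2*q) + ∑ p ∈ Finset.range (2*q+1), ((-1:ℂ)^(2*q-p)) • (chat e p * chat e (2*q-p)) := by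
      nth_rewrite 1 [key]; abel
    rw [two_smul, h2]
    congr 1
    conv_rhs => rw [← Finset.sum_range_reflect]
    refine Finset.sum_congr rfl fun p hp => ?_
    have hple : p < 2*q+1 := Finset.mem_range.mp hp
    rw [show 2*q+1-1-p = 2*q-p from by omega, show 2*q-(2*q-p) = p from by omega]
  refine ⟨main, ?_, ?_⟩
  · have h := main 0
    simpa using h
  · have h1 : chat e 1 = ∑ i : Fin n, ehat e i i := by
      refine Finset.sum_congr rfl fun i _ => ?_
      simp [epow_succ, epow_zero, mul_ite, mul_one, mul_zero, Finset.sum_ite_eq']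
    rw [h1]
    have h2 : ∀ i : Fin n, ehat e i i = (((n:ℂ)-1)/2) • (1:R) := by
      intro i; simp [ehat, hdiag i]
    simp_rw [h2]
    rw [Finset.sum_const, Finset.card_univ, Fintype.card_fin,
      ← Nat.cast_smul_eq_nsmul ℂ, smul_smul]
    congr 1
    ring
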